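/- Every symmetric N×N real matrix that is a B-matrix is positive definite. -/

import Mathlib

open Matrix Finset

/-- A real square matrix is a *B-matrix* if every row sum is positive and every off-diagonal
entry is strictly smaller than the corresponding row mean. -/
def IsBMatrix {N : ℕ} (A : Matrix (Fin N) (Fin N) ℝ) : Prop :=
  ∀ i, 0 < ∑ k, A i k ∧ ∀ j, j ≠ i → A i j < (∑ k, A i k) / (N : ℝ)

lemma min_kernel_psd {ι : Type*} [DecidableEq ι] (s : Finset ι) :
    ∀ (c x : ι → ℝ), (∀ i ∈ s, 0 ≤ c i) →
      0 ≤ ∑ i ∈ s, ∑ j ∈ s, min (c i) (c j) * (x i * x j) := by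
  induction s using Finset.strongInduction with
  | _ s ih =>
    intro c x hc
    rcases s.eq_empty_or_nonempty with rfl | hne
    · simp
    obtain ⟨i₀, hi₀, hmin⟩ := s.exists_min_image c hne
    have hm : 0 ≤ c i₀ := hc i₀ hi₀
    have split : ∀ i j : ι, min (c i) (c j) * (x i * x j)
        = c i₀ * (x i * x j) + min (c i - c i₀) (c j - c i₀) * (x i * x j) := by
      intro i j
      rcases le_total (c i) (c j) with h | h
      · rw [min_eq_left h, min_eq_left (by linarith)]; ring
      · rw [min_eq_right h, min_eq_right (by linarith)]; ring
    have h1 : ∑ i ∈ s, ∑ j ∈ s, min (c i) (c j) * (x i * x j)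
        = c i₀ * (∑ i ∈ s, x i) ^ 2
          + ∑ i ∈ s, ∑ j ∈ s, min (c i - c i₀) (c j - c i₀) * (x i * x j) := by
      simp_rw [split, Finset.sum_add_distrib]
      congr 1
      rw [sq, Finset.sum_mul_sum, Finset.mul_sum]
      congr 1; ext i; rw [Finset.mul_sum]
    have hrow : ∀ j ∈ s, min (c i₀ - c i₀) (c j - c i₀) * (x i₀ * x j) = 0 := by
      intro j hj
      have : min (c i₀ - c i₀) (c j - c i₀) = 0 := by
        rw [sub_self]
        exact min_eq_left (by linarith [hmin j hj])
      rw [this, zero_mul]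
    have h2 : ∑ i ∈ s, ∑ j ∈ s, min (c i - c i₀) (c j - c i₀) * (x i * x j)
        = ∑ i ∈ s.erase i₀, ∑ j ∈ s.erase i₀, min (c i - c i₀) (c j - c i₀) * (x i * x j) := by
      rw [← Finset.add_sum_erase _ _ hi₀]
      rw [Finset.sum_eq_zero hrow, zero_add]
      refine Finset.sum_congr rfl fun i hi => ?_
      rw [← Finset.add_sum_erase _ _ hi₀]
      have : min (c i - c i₀) (c i₀ - c i₀) * (x i * x i₀) = 0 := by
        have : min (c i - c i₀) (c i₀ - c i₀) = 0 := by
          rw [sub_self]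
          exact min_eq_right (by linarith [hmin i (Finset.mem_of_mem_erase hi)])
        rw [this, zero_mul]
      rw [this, zero_add]
    rw [h1, h2]
    have hrec := ih (s.erase i₀) (Finset.erase_ssubset hi₀) (fun i => c i - c i₀) x
      (fun i hi => sub_nonneg.2 (hmin i (Finset.mem_of_mem_erase hi)))
    positivity

theorem stmt7' (N : ℕ) (A : Matrix (Fin N) (Fin N) ℝ)
    (hsymm : A.IsSymm) (hB : (∀ i, 0 < ∑ k, A i k ∧ ∀ j, j ≠ i → A i j < (∑ k, A i k) / (N:ℝ))) :
    A.PosDef := by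
  have herm : A.IsHermitian := by
    rw [Matrix.IsHermitian]
    ext i j
    simp [Matrix.conjTranspose_apply]
    exact hsymm.apply i j
  refine Matrix.posDef_iff_dotProduct_mulVec.mpr ⟨herm, fun x hx => ?_⟩
  obtain ⟨i₀, hi₀⟩ := Function.ne_iff.mp hx
  simp only [Pi.zero_apply] at hi₀
  have hN' : (0:ℝ) < N := by exact_mod_cast i₀.pos
  set S : Fin N → ℝ := fun i => ∑ k, A i k with hS
  set c : Fin N → ℝ := fun i => S i / N with hc_def
  have hs : ∀ i, 0 < S i := fun i => (hB i).1
  have hc : ∀ i, 0 < c i := fun i => div_pos (hs i) hN'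
  have hNc : ∀ i, (N:ℝ) * c i = S i := fun i => by
    rw [hc_def]; field_simp
  have hAsym : ∀ i j, A j i = A i j := fun i j => hsymm.apply i j
  have hlt : ∀ i j, i ≠ j → A i j < min (c i) (c j) := by
    intro i j hij
    refine lt_min ((hB i).2 j (Ne.symm hij)) ?_
    rw [← hAsym i j] at *
    exact (hB j).2 i hij
  have hquad : star x ⬝ᵥ A *ᵥ x = ∑ i, ∑ j, A i j * (x i * x j) := by
    simp only [star_trivial, dotProduct, mulVec, Finset.mul_sum]
    exact Finset.sum_congr rfl fun i _ => Finset.sum_congr rfl fun j _ => by ring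
  rw [hquad]
  by_cases hconst : ∀ i j, x i = x j
  · have heq : ∑ i, ∑ j, A i j * (x i * x j) = (∑ i, S i) * (x i₀)^2 := by
      rw [Finset.sum_mul]
      refine Finset.sum_congr rfl fun i _ => ?_
      rw [hS, Finset.sum_mul]
      exact Finset.sum_congr rfl fun j _ => by
        rw [hconst i i₀, hconst j i₀]; ring
    rw [heq]
    have h1 : 0 < ∑ i, S i := Finset.sum_pos (fun i _ => hs i) ⟨i₀, Finset.mem_univ i₀⟩
    positivity
  · push_neg at hconst
    obtain ⟨a, b, hab⟩ := hconst
    have hane : a ≠ b := fun h => hab (by rw [h])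
    obtain ⟨g, hg⟩ : ∃ g : Fin N → Fin N → ℝ, ∀ i j, g i j =
        min (c i) (c j) * (x i * x j) - (min (c i) (c j) - A i j) * ((x i)^2 + (x j)^2) / 2 :=
      ⟨_, fun i j => rfl⟩
    have hdiff : ∀ i j, A i j * (x i * x j) - g i j
        = (min (c i) (c j) - A i j) * (x i - x j)^2 / 2 := by
      intro i j; rw [hg i j]; ring
    have hpt : ∀ i j, g i j ≤ A i j * (x i * x j) := by
      intro i j
      rcases eq_or_ne i j with rfl | hij
      · have h0 : (x i - x i)^2 = 0 := by ring
        have := hdiff i i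
        rw [h0] at this
        linarith
      · have h1 : 0 ≤ (min (c i) (c j) - A i j) * (x i - x j)^2 / 2 :=
          div_nonneg (mul_nonneg (sub_pos.2 (hlt i j hij)).le (sq_nonneg _)) two_pos.le
        linarith [hdiff i j]
    have hstrict : g a b < A a b * (x a * x b) := by
      have hsq : 0 < (x a - x b)^2 := by
        have := sub_ne_zero.2 hab
        positivity
      have h1 : 0 < (min (c a) (c b) - A a b) * (x a - x b)^2 / 2 :=
        div_pos (mul_pos (sub_pos.2 (hlt a b hane)) hsq) two_pos
      linarith [hdiff a b]
    have hsumlt : ∑ i, ∑ j, g i j < ∑ i, ∑ j, A i j * (x i * x j) := by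
      rw [← Finset.sum_product' (f := fun i j => g i j),
          ← Finset.sum_product' (f := fun i j => A i j * (x i * x j))]
      exact Finset.sum_lt_sum (fun p _ => hpt p.1 p.2)
        ⟨(a, b), Finset.mem_product.2 ⟨Finset.mem_univ a, Finset.mem_univ b⟩, hstrict⟩
    refine lt_of_le_of_lt ?_ hsumlt
    have expand : ∀ i j, g i j = min (c i) (c j) * (x i * x j)
        - ((min (c i) (c j) - A i j) * (x i)^2) / 2
        - ((min (c i) (c j) - A i j) * (x j)^2) / 2 := by
      intro i j; rw [hg i j]; ring
    have hswap : ∑ i, ∑ j, (min (c i) (c j) - A i j) * (x j)^2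
        = ∑ i, ∑ j, (min (c i) (c j) - A i j) * (x i)^2 := by
      rw [Finset.sum_comm]
      exact Finset.sum_congr rfl fun i _ => Finset.sum_congr rfl fun j _ => by
        rw [min_comm, hAsym i j]
    have hT1 : ∑ i, ∑ j, (min (c i) (c j) - A i j) * (x i)^2
        = ∑ i, ((∑ j, min (c i) (c j)) - S i) * (x i)^2 := by
      refine Finset.sum_congr rfl fun i _ => ?_
      rw [← Finset.sum_mul, Finset.sum_sub_distrib]
    have hGsum : ∑ i, ∑ j, g i j
        = (∑ i, ∑ j, min (c i) (c j) * (x i * x j))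
          - ∑ i, ((∑ j, min (c i) (c j)) - S i) * (x i)^2 := by
      simp_rw [expand, Finset.sum_sub_distrib, ← Finset.sum_div]
      rw [hswap, hT1]
      ring
    have hM : 0 ≤ ∑ i, ∑ j, min (c i) (c j) * (x i * x j) :=
      min_kernel_psd Finset.univ c x (fun i _ => (hc i).le)
    have hT1le : ∑ i, ((∑ j, min (c i) (c j)) - S i) * (x i)^2 ≤ 0 := by
      refine Finset.sum_nonpos fun i _ => ?_
      have hle : ∑ j, min (c i) (c j) ≤ S i := by
        calc ∑ j, min (c i) (c j) ≤ ∑ _j : Fin N, c i :=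
              Finset.sum_le_sum fun j _ => min_le_left _ _
          _ = (N:ℝ) * c i := by
              rw [Finset.sum_const, Finset.card_univ, Fintype.card_fin, nsmul_eq_mul]
          _ = S i := hNc i
      exact mul_nonpos_of_nonpos_of_nonneg (by linarith) (sq_nonneg _)
    rw [hGsum]
    linarith

/-- Every symmetric real B-matrix is positive definite. -/
theorem stmt7 (N : ℕ) (A : Matrix (Fin N) (Fin N) ℝ)
    (hsymm : A.IsSymm) (hB : IsBMatrix A) :
    A.PosDef := by
  exact stmt7' N A hsymm hB
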